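/- Let N be geometric on {1,2,...} with parameter 1-p, 0 < p < 1, and X exponential with rate λ = -ln p. Then E[N] - E[X] = 1/(1-p) + 1/ln p, and this quantity lies in [0,1]. -/
import Mathlib


/-- For a geometric random variable on `{1,2,...}` with parameter `1-p`
(mean `1/(1-p)`) and an exponential random variable with rate `λ = -ln p`
(mean `1/λ = -1/ln p`), the difference of means equals `1/(1-p) + 1/ln p`,
and this quantity lies in `[0,1]`. -/
theorem stmt_4 (p : ℝ) (hp0 : 0 < p) (hp1 : p < 1) :
    1 / (1 - p) - 1 / (-Real.log p) = 1 / (1 - p) + 1 / Real.log p ∧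
    0 ≤ 1 / (1 - p) + 1 / Real.log p ∧
    1 / (1 - p) + 1 / Real.log p ≤ 1 := by
  set l := Real.log p with hl'
  have h1p : 0 < 1 - p := by linarith
  have hl : l < 0 := Real.log_neg hp0 hp1
  have hA : l ≤ p - 1 := Real.log_le_sub_one_of_pos hp0
  have hB : -(p * l) ≤ 1 - p := by
    have h := Real.log_le_sub_one_of_pos (show (0:ℝ) < p⁻¹ by positivity)
    rw [Real.log_inv] at h
    have hp' : p * (-l) ≤ p * (p⁻¹ - 1) := by
      exact mul_le_mul_of_nonneg_left h hp0.le
    rw [mul_sub, mul_inv_cancel₀ (ne_of_gt hp0)] at hp'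
    nlinarith
  have hden : 0 < (1 - p) * (-l) := mul_pos h1p (by linarith)
  have hlne : l ≠ 0 := ne_of_lt hl
  have h1pne : (1 - p) ≠ 0 := ne_of_gt h1p
  refine ⟨by ring, ?_, ?_⟩
  · have e : 1 / (1 - p) + 1 / l = ((p - 1) - l) / ((1 - p) * (-l)) := by
      field_simp
      ring
    rw [e]
    exact div_nonneg (by linarith) hden.le
  · have e : 1 - (1 / (1 - p) + 1 / l) = (p * l + 1 - p) / ((1 - p) * (-l)) := by
      field_simp
      ring
    have : 0 ≤ 1 - (1 / (1 - p) + 1 / l) := by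
      rw [e]; exact div_nonneg (by linarith) hden.le
    linarith
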